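/- Let C be a skeletal finite EI category, k a field in which all automorphism group orders are invertible, and let Λ = rad(kC) be the span of non-isomorphisms. Then rad²(kC) = Λ² is spanned by the morphisms that can be written as a composite of two non-isomorphisms, and Λ/Λ² has as a basis the images of the unfactorizable morphisms of C. -/

import Mathlib

open CategoryTheory
open scoped Classical

/-- Witness that `A` is the category algebra `kC` of the finite category `C`: it has a
`k`-basis indexed by the morphisms of `C`, the product of two basis elements is the basis
element of their composite when composable and `0` otherwise, and the identity element is
the sum of the identity morphisms. -/
structure CategoryAlgebraData (k : Type*) [Field k] (C : Type*) [Category C] [Fintype C]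
    (A : Type*) [Ring A] [Algebra k A] where
  basis : Module.Basis (Σ x y : C, x ⟶ y) k A
  basis_mul_basis : ∀ (x₁ y₁ x₂ y₂ : C) (f : x₁ ⟶ y₁) (g : x₂ ⟶ y₂),
    basis ⟨x₁, y₁, f⟩ * basis ⟨x₂, y₂, g⟩ =
      if h : y₂ = x₁ then basis ⟨x₂, y₁, g ≫ eqToHom h ≫ f⟩ else 0
  one_def : (1 : A) = ∑ x : C, basis ⟨x, x, 𝟙 x⟩

/-- A morphism is unfactorizable if it is not an isomorphism and in any factorization into
two morphisms one factor is an isomorphism. -/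
def Unfactorizable {C : Type*} [Category C] {x z : C} (α : x ⟶ z) : Prop :=
  ¬ IsIso α ∧ ∀ (y : C) (β : x ⟶ y) (γ : y ⟶ z), α = β ≫ γ → IsIso β ∨ IsIso γ

/-- Let `Λ = rad(kC)` be the span of the non-isomorphisms in the category algebra of a
skeletal finite EI category with all automorphism group orders invertible in `k`.  Then
`Λ² = rad²(kC)` is spanned by the composites of two non-isomorphisms, and `Λ/Λ²` has as a
basis the images of the unfactorizable morphisms: the images of the unfactorizable
morphisms in `A/Λ²` are linearly independent and span the image of `Λ`. -/
theorem stmt7 {k : Type*} [Field k] {C : Type*} [Category C] [Fintype C]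
    [∀ x y : C, Finite (x ⟶ y)]
    (hEI : ∀ (x : C) (f : x ⟶ x), IsIso f)
    (hskel : ∀ x y : C, (x ≅ y) → x = y)
    (hord : ∀ x : C, (Nat.card (Aut x) : k) ≠ 0)
    {A : Type*} [Ring A] [Algebra k A] (hA : CategoryAlgebraData k C A)
    (Λ : Submodule k A)
    (hΛ : Λ = Submodule.span k
      {a : A | ∃ (x y : C) (f : x ⟶ y), ¬ IsIso f ∧ a = hA.basis ⟨x, y, f⟩}) :
    Λ * Λ = Submodule.span k
      {a : A | ∃ (x y z : C) (f : x ⟶ y) (g : y ⟶ z),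
        ¬ IsIso f ∧ ¬ IsIso g ∧ a = hA.basis ⟨x, z, f ≫ g⟩} ∧
    LinearIndependent k
      (fun u : {i : Σ x y : C, x ⟶ y // Unfactorizable i.2.2} =>
        Submodule.mkQ (Λ * Λ) (hA.basis u.1)) ∧
    Submodule.span k
      (Set.range (fun u : {i : Σ x y : C, x ⟶ y // Unfactorizable i.2.2} =>
        Submodule.mkQ (Λ * Λ) (hA.basis u.1))) = Λ.map (Submodule.mkQ (Λ * Λ)) := by
  classical
  set S : Set A := {a : A | ∃ (x y : C) (f : x ⟶ y), ¬ IsIso f ∧ a = hA.basis ⟨x, y, f⟩}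
    with hS
  set S₂ : Set A := {a : A | ∃ (x y z : C) (f : x ⟶ y) (g : y ⟶ z),
      ¬ IsIso f ∧ ¬ IsIso g ∧ a = hA.basis ⟨x, z, f ≫ g⟩} with hS₂
  subst hΛ
  set T₁ : Set (Σ x y : C, x ⟶ y) :=
    {i | ∃ (y : C) (f : i.1 ⟶ y) (g : y ⟶ i.2.1), ¬ IsIso f ∧ ¬ IsIso g ∧ i.2.2 = f ≫ g}
    with hT₁
  set T₂ : Set (Σ x y : C, x ⟶ y) := {i | Unfactorizable i.2.2} with hT₂
  have himg : hA.basis '' T₁ = S₂ := by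
    ext a
    constructor
    · rintro ⟨⟨x, z, h⟩, ⟨y, f, g, hf, hg, hfg⟩, rfl⟩
      exact ⟨x, y, z, f, g, hf, hg, by rw [show h = f ≫ g from hfg]⟩
    · rintro ⟨x, y, z, f, g, hf, hg, rfl⟩
      exact ⟨⟨x, z, f ≫ g⟩, ⟨y, f, g, hf, hg, rfl⟩, rfl⟩
  -- Part 1
  have hmul : Submodule.span k S * Submodule.span k S = Submodule.span k S₂ := by
    rw [Submodule.span_mul_span]
    apply le_antisymm
    · rw [Submodule.span_le]
      rintro a ⟨u, ⟨x₁, y₁, f, hf, rfl⟩, v, ⟨x₂, y₂, g, hg, rfl⟩, rfl⟩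
      simp only [hA.basis_mul_basis]
      by_cases h : y₂ = x₁
      · subst h
        rw [dif_pos rfl]
        exact Submodule.subset_span ⟨x₂, y₂, y₁, g, f, hg, hf, by simp⟩
      · rw [dif_neg h]
        exact (Submodule.span k S₂).zero_mem
    · rw [Submodule.span_le]
      rintro a ⟨x, y, z, f, g, hf, hg, rfl⟩
      apply Submodule.subset_span
      refine ⟨hA.basis ⟨y, z, g⟩, ⟨y, z, g, hg, rfl⟩,
        hA.basis ⟨x, y, f⟩, ⟨x, y, f, hf, rfl⟩, ?_⟩
      simp only [hA.basis_mul_basis, dif_pos]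
      simp
  -- Part 2
  have hdisjT : Disjoint T₂ T₁ := by
    rw [Set.disjoint_left]
    rintro i hi2 ⟨y, f, g, hf, hg, hfg⟩
    rcases hi2.2 y f g hfg with h | h
    · exact hf h
    · exact hg h
  have hli0 : LinearIndependent k (fun u : T₂ => hA.basis u.1) :=
    hA.basis.linearIndependent.comp _ Subtype.val_injective
  have hrange : Set.range (fun u : T₂ => hA.basis u.1) = hA.basis '' T₂ := by
    rw [show (fun u : T₂ => hA.basis u.1) = hA.basis ∘ Subtype.val from rfl,
      Set.range_comp, Subtype.range_val]
  have hdisj : Disjoint (Submodule.span k (Set.range (fun u : T₂ => hA.basis u.1)))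
      (LinearMap.ker (Submodule.mkQ (Submodule.span k S * Submodule.span k S))) := by
    rw [Submodule.ker_mkQ, hmul, ← himg, hrange]
    exact hA.basis.linearIndependent.disjoint_span_image hdisjT
  have hli : LinearIndependent k
      (fun u : {i : Σ x y : C, x ⟶ y // Unfactorizable i.2.2} =>
        Submodule.mkQ (Submodule.span k S * Submodule.span k S) (hA.basis u.1)) :=
    hli0.map hdisj
  refine ⟨hmul, hli, ?_⟩
  -- Part 3
  apply le_antisymm
  · rw [Submodule.span_le]
    rintro a ⟨u, rfl⟩
    exact Submodule.mem_map_of_mem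
      (Submodule.subset_span ⟨u.1.1, u.1.2.1, u.1.2.2, u.2.1, rfl⟩)
  · rw [Submodule.map_span, Submodule.span_le]
    rintro a ⟨b, ⟨x, y, f, hf, rfl⟩, rfl⟩
    by_cases hu : Unfactorizable f
    · exact Submodule.subset_span ⟨⟨⟨x, y, f⟩, hu⟩, rfl⟩
    · unfold Unfactorizable at hu
      push_neg at hu
      obtain ⟨y', β, γ, hfe, hβ, hγ⟩ := hu hf
      have hmem : hA.basis ⟨x, y, f⟩ ∈
          Submodule.span k S * Submodule.span k S := by
        rw [hmul]
        exact Submodule.subset_span ⟨x, y', y, β, γ, hβ, hγ, by rw [hfe]⟩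
      have h0 : Submodule.mkQ (Submodule.span k S * Submodule.span k S)
          (hA.basis ⟨x, y, f⟩) = 0 := by
        rwa [← LinearMap.mem_ker, Submodule.ker_mkQ]
      rw [h0]
      exact Submodule.zero_mem _
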